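/- Let A be a real n×n Metzler matrix (all off-diagonal entries nonnegative) and suppose there exists a vector z ∈ ℝⁿ with z_i > 0 for all i such that every entry of the row vector zᵀA is ≤ 0. If μ ∈ ℂ is an eigenvalue of A with real part equal to 0, then μ = 0. Consequently, if in addition det A ≠ 0, then every eigenvalue of A has strictly negative real part, i.e., A is a Hurwitz matrix. -/

import Mathlib

open Matrix

lemma gershgorin_key {n : ℕ}
    (A : Matrix (Fin n) (Fin n) ℝ)
    (hMetzler : ∀ i j, i ≠ j → 0 ≤ A i j)
    (z : Fin n → ℝ) (hz : ∀ i, 0 < z i)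
    (hdd : ∀ j, ∑ i, z i * A i j ≤ 0)
    (μ : ℂ) (hμ : ∃ v : Fin n → ℂ, v ≠ 0 ∧ (A.map Complex.ofReal) *ᵥ v = μ • v) :
    ∃ i, ‖μ - (A i i : ℂ)‖ ≤ -A i i := by
  obtain ⟨v, hv0, hAv⟩ := hμ
  have hdet : ((A.map Complex.ofReal) - μ • 1).det = 0 := by
    rw [← Matrix.exists_mulVec_eq_zero_iff]
    refine ⟨v, hv0, ?_⟩
    rw [Matrix.sub_mulVec, hAv, Matrix.smul_mulVec, Matrix.one_mulVec, sub_self]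
  have hdetT : (((A.map Complex.ofReal) - μ • 1)ᵀ).det = 0 := by
    rw [Matrix.det_transpose]; exact hdet
  obtain ⟨w, hw0, hw⟩ := Matrix.exists_mulVec_eq_zero_iff.mpr hdetT
  rw [Matrix.transpose_sub, Matrix.transpose_smul, Matrix.transpose_one, Matrix.sub_mulVec,
    Matrix.smul_mulVec, Matrix.one_mulVec, sub_eq_zero] at hw
  have heig : ∀ i, ∑ j, (A j i : ℂ) * w j = μ * w i := by
    intro i
    have := congrFun hw i
    simpa [Matrix.mulVec, dotProduct, Matrix.transpose_apply, Matrix.map_apply]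
      using this
  set t : Fin n → ℝ := fun j => ‖w j‖ / z j with ht
  have hne : (Finset.univ : Finset (Fin n)).Nonempty := by
    obtain ⟨k, hk⟩ := Function.ne_iff.mp hw0
    exact ⟨k, Finset.mem_univ k⟩
  obtain ⟨i, -, hi⟩ := Finset.exists_max_image Finset.univ t hne
  have hti : 0 < t i := by
    obtain ⟨k, hk⟩ := Function.ne_iff.mp hw0
    have : (0:ℝ) < ‖w k‖ / z k := div_pos (by simpa using hk) (hz k)
    exact lt_of_lt_of_le this (hi k (Finset.mem_univ k))
  have hwj : ∀ j, ‖w j‖ ≤ z j * t i := by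
    intro j
    have h1 : ‖w j‖ / z j ≤ t i := hi j (Finset.mem_univ j)
    calc ‖w j‖ = z j * (‖w j‖ / z j) := by
          rw [mul_comm, div_mul_cancel₀ _ (hz j).ne']
      _ ≤ z j * t i := mul_le_mul_of_nonneg_left h1 (hz j).le
  have hwi : ‖w i‖ = z i * t i := by
    show ‖w i‖ = z i * (‖w i‖ / z i)
    rw [mul_comm, div_mul_cancel₀ _ (hz i).ne']
  refine ⟨i, ?_⟩
  have hsplit : (μ - (A i i : ℂ)) * w i = ∑ j ∈ Finset.univ.erase i, (A j i : ℂ) * w j := by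
    have h := heig i
    rw [← Finset.add_sum_erase _ _ (Finset.mem_univ i)] at h
    linear_combination -h
  have habs : ‖μ - (A i i : ℂ)‖ * (z i * t i)
      ≤ (∑ j ∈ Finset.univ.erase i, z j * A j i) * t i := by
    calc ‖μ - (A i i : ℂ)‖ * (z i * t i)
        = ‖(μ - (A i i : ℂ)) * w i‖ := by rw [norm_mul, hwi]
      _ = ‖∑ j ∈ Finset.univ.erase i, (A j i : ℂ) * w j‖ := by rw [hsplit]
      _ ≤ ∑ j ∈ Finset.univ.erase i, ‖(A j i : ℂ) * w j‖ :=
          norm_sum_le _ _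
      _ ≤ ∑ j ∈ Finset.univ.erase i, z j * A j i * t i := by
          refine Finset.sum_le_sum ?_
          intro j hj
          have hji : j ≠ i := Finset.ne_of_mem_erase hj
          have hA : 0 ≤ A j i := hMetzler j i hji
          rw [norm_mul, Complex.norm_real, Real.norm_eq_abs, abs_of_nonneg hA]
          calc A j i * ‖w j‖ ≤ A j i * (z j * t i) :=
                mul_le_mul_of_nonneg_left (hwj j) hA
            _ = z j * A j i * t i := by ring
      _ = (∑ j ∈ Finset.univ.erase i, z j * A j i) * t i := by rw [Finset.sum_mul]
  have hsum : ∑ j ∈ Finset.univ.erase i, z j * A j i ≤ -(z i * A i i) := by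
    have h := hdd i
    rw [← Finset.add_sum_erase _ _ (Finset.mem_univ i)] at h
    linarith
  have h2 : ‖μ - (A i i : ℂ)‖ * (z i * t i) ≤ -(A i i) * (z i * t i) := by
    calc ‖μ - (A i i : ℂ)‖ * (z i * t i)
        ≤ (∑ j ∈ Finset.univ.erase i, z j * A j i) * t i := habs
      _ ≤ -(z i * A i i) * t i := mul_le_mul_of_nonneg_right hsum hti.le
      _ = -(A i i) * (z i * t i) := by ring
  have hpos : 0 < z i * t i := mul_pos (hz i) hti
  exact le_of_mul_le_mul_right (by linarith) hpos

/-- If `A` is a real `n×n` Metzler matrix admitting a strictly positive vector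
`z` with `zᵀA ≤ 0` componentwise, then any eigenvalue of `A` with zero real part is zero;
consequently, if moreover `det A ≠ 0`, then every eigenvalue of `A` has strictly negative
real part (`A` is Hurwitz). -/
theorem metzler_diag_dominant_hurwitz {n : ℕ}
    (A : Matrix (Fin n) (Fin n) ℝ)
    (hMetzler : ∀ i j, i ≠ j → 0 ≤ A i j)
    (z : Fin n → ℝ) (hz : ∀ i, 0 < z i)
    (hdd : ∀ j, ∑ i, z i * A i j ≤ 0) :
    (∀ μ : ℂ, (∃ v : Fin n → ℂ, v ≠ 0 ∧ (A.map Complex.ofReal) *ᵥ v = μ • v) →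
      μ.re = 0 → μ = 0) ∧
    (A.det ≠ 0 →
      ∀ μ : ℂ, (∃ v : Fin n → ℂ, v ≠ 0 ∧ (A.map Complex.ofReal) *ᵥ v = μ • v) → μ.re < 0) := by
  have key := gershgorin_key A hMetzler z hz hdd
  have part1 : ∀ μ : ℂ, (∃ v : Fin n → ℂ, v ≠ 0 ∧ (A.map Complex.ofReal) *ᵥ v = μ • v) →
      μ.re = 0 → μ = 0 := by
    intro μ hμ hre
    obtain ⟨i, hi⟩ := key μ hμ
    have hAii : A i i ≤ 0 := by
      have := (norm_nonneg (μ - (A i i : ℂ))).trans hi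
      linarith
    have hsq : ‖μ - (A i i : ℂ)‖ ^ 2 ≤ (-A i i) ^ 2 :=
      pow_le_pow_left₀ (norm_nonneg _) hi 2
    rw [Complex.sq_norm, Complex.normSq_apply] at hsq
    simp only [Complex.sub_re, Complex.sub_im, Complex.ofReal_re, Complex.ofReal_im, hre] at hsq
    have him : μ.im = 0 := by nlinarith [sq_nonneg μ.im]
    exact Complex.ext hre him
  refine ⟨part1, ?_⟩
  intro hdet μ hμ
  obtain ⟨i, hi⟩ := key μ hμ
  have hre_le : μ.re ≤ 0 := by
    have h1 : μ.re - A i i ≤ ‖μ - (A i i : ℂ)‖ := by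
      have := Complex.re_le_norm (μ - (A i i : ℂ))
      simpa [Complex.sub_re] using this
    linarith
  rcases lt_or_eq_of_le hre_le with h | h
  · exact h
  · exfalso
    have hμ0 : μ = 0 := part1 μ hμ h
    obtain ⟨v, hv0, hAv⟩ := hμ
    rw [hμ0, zero_smul] at hAv
    have hd0 : (A.map Complex.ofReal).det = 0 :=
      Matrix.exists_mulVec_eq_zero_iff.mp ⟨v, hv0, hAv⟩
    have hd : (A.det : ℂ) = (A.map Complex.ofReal).det := by
      have h := RingHom.map_det (algebraMap ℝ ℂ) A
      simpa [RingHom.mapMatrix_apply, Complex.coe_algebraMap] using h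
    exact hdet (by exact_mod_cast hd.trans hd0)
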